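/- Let P be a point set of F^m points in [0,1)^s. If P is strongly (m_1,...,m_s)-equidistributed in base φ, then P is strongly (n_1,...,n_s)-equidistributed in base φ for all integer tuples with 0 ≤ n_j ≤ m_j for each j. -/

import Mathlib

open Finset

/-- `F m` denotes `F^m := F_{m+2}`, the Fibonacci numbers with shifted index,
so `F^{-2} = 0`, `F^{-1} = 1`, `F^0 = 1`, `F^1 = 2`, … (and `F^m = 0` for `m < -2`). -/
def F (m : ℤ) : ℕ := Nat.fib (m + 2).toNat

lemma F_pos (m : ℤ) (h : -2 < m) : 0 < F m := Nat.fib_pos.mpr (by omega)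

/-- The set of indices of the `1` digits in the (unique) Zeckendorf representation
`n = ∑_{j ∈ zeckSet n} F^j` (no two consecutive indices), computed greedily. -/
def zeckSet : ℕ → Finset ℕ
  | 0 => ∅
  | (n + 1) =>
      insert (Nat.findGreatest (fun i => F i ≤ n + 1) (n + 1))
        (zeckSet (n + 1 - F (Nat.findGreatest (fun i => F i ≤ n + 1) (n + 1))))
decreasing_by exact Nat.sub_lt (Nat.succ_pos n) (F_pos _ (by omega))

/-- The golden ratio `φ = (1 + √5)/2`. -/
noncomputable def phi : ℝ := (1 + Real.sqrt 5) / 2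

/-- `|n|`, the zeroth Zeckendorf digit of `n`. -/
def zd0 (n : ℕ) : ℕ := if 0 ∈ zeckSet n then 1 else 0

/-- `n‾ = ∑_j d_j φ^j`, the `n`-th whole number in base `φ`. -/
noncomputable def zbar (n : ℕ) : ℝ := ∑ j ∈ zeckSet n, phi ^ j

/-- `n ⊙ φ^k = ∑_j d_j F^{j+k}`, the Zeckendorf digit shift. -/
def zshift (n : ℕ) (k : ℤ) : ℕ := ∑ j ∈ zeckSet n, F (j + k)

/-- A point set `P` of `F^m` points in `[0,1)^s` is *strongly (m₁,…,m_s)-equidistributed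
in base φ* if every interval `I = Π_j [a_j‾/φ^{m_j}, (a_j+1)‾/φ^{m_j})` of the
`(m₁,…,m_s)`-partition contains exactly `F^(m−|I|)` points of `P`, where
`|I| = ∑_j (m_j + |a_j|)`. -/
def StronglyEquidistributed (s m : ℕ) (P : Fin (F m) → Fin s → ℝ) (mv : Fin s → ℕ) :
    Prop :=
  ∀ a : Fin s → ℕ, (∀ j, a j < F (mv j)) →
    Nat.card {i : Fin (F m) //
        ∀ j, P i j ∈ Set.Ico (zbar (a j) / phi ^ (mv j)) (zbar (a j + 1) / phi ^ (mv j))} =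
      F ((m : ℤ) - ∑ j, ((mv j : ℤ) + (zd0 (a j) : ℤ)))

lemma F_mono {i j : ℤ} (h : i ≤ j) : F i ≤ F j := Nat.fib_mono (by omega)
lemma F_add (k : ℤ) (h : 0 ≤ k) : F k = F (k-1) + F (k-2) := by
  unfold F
  have h2 : (k + 2).toNat = (k - 2 + 2).toNat + 2 := by omega
  have h1 : (k - 1 + 2).toNat = (k - 2 + 2).toNat + 1 := by omega
  rw [h2, h1, Nat.fib_add_two, Nat.add_comm]
lemma F_strictMono {i j : ℤ} (hi : 0 ≤ i) (h : i < j) : F i < F j :=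
  (Nat.fib_lt_fib (m := (i+2).toNat) (by omega)).2 (by omega)
lemma nat_le_fib_succ : ∀ n : ℕ, n ≤ Nat.fib (n + 1)
  | 0 => by simp
  | 1 => by simp
  | (n+2) => by
      rw [Nat.fib_add_two (n := n+1)]
      have h1 := nat_le_fib_succ (n+1)
      have h2 : 0 < Nat.fib (n+1) := Nat.fib_pos.2 (by omega)
      omega
lemma F_ge (n : ℕ) : n + 1 ≤ F (n : ℤ) := by
  unfold F
  have h : ((n : ℤ) + 2).toNat = (n + 1) + 1 := by omega
  rw [h]
  exact nat_le_fib_succ (n+1)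
lemma F_neg (k : ℤ) (h : k ≤ -2) : F k = 0 := by
  unfold F; have : (k+2).toNat = 0 := by omega
  rw [this]; rfl

-- zeckSet zero
lemma zeckSet_zero : zeckSet 0 = ∅ := by rw [zeckSet]

lemma zeck_spec (n : ℕ) :
    (∑ j ∈ zeckSet n, F (j:ℤ) = n) ∧ (∀ j ∈ zeckSet n, j+1 ∉ zeckSet n) ∧
    (∀ j ∈ zeckSet n, F (j:ℤ) ≤ n) := by
  induction n using Nat.strong_induction_on with
  | _ n IH =>
    match n with
    | 0 => simp [zeckSet_zero]
    | (n+1) =>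
      set g := Nat.findGreatest (fun i => F i ≤ n + 1) (n + 1) with hg
      have hPg : F (g:ℤ) ≤ n + 1 :=
        Nat.findGreatest_spec (P := fun i => F (i:ℤ) ≤ n+1) (Nat.zero_le _) (by simp [F])
      have hgn : g ≤ n := by
        have hle : g ≤ n + 1 := Nat.findGreatest_le _
        rcases Nat.lt_or_ge g (n+1) with h | h
        · omega
        · exfalso; have := F_ge g; omega
      have hub : n + 1 < F ((g:ℤ)+1) := by
        by_contra h
        push_neg at h
        have h2 : g + 1 ≤ Nat.findGreatest (fun i => F (i:ℤ) ≤ n+1) (n+1) :=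
          Nat.le_findGreatest (by omega) (by push_cast; exact h)
        omega
      have hFg_pos : 0 < F (g:ℤ) := F_pos _ (by omega)
      set r := n + 1 - F (g:ℤ) with hr
      have hrlt : r < n + 1 := by omega
      have hrF : r < F ((g:ℤ)-1) := by
        have := F_add ((g:ℤ)+1) (by omega)
        simp only [add_sub_cancel_right] at this
        have h2 : (g:ℤ) + 1 - 2 = (g:ℤ) - 1 := by ring
        rw [h2] at this
        omega
      obtain ⟨IH1, IH2, IH3⟩ := IH r hrlt
      have hsmall : ∀ j ∈ zeckSet r, (j:ℤ) < (g:ℤ) - 1 := by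
        intro j hj
        by_contra h
        push_neg at h
        have := F_mono h
        have := IH3 j hj
        omega
      have hset : zeckSet (n+1) = insert g (zeckSet r) := by rw [zeckSet]
      have hgnot : g ∉ zeckSet r := by
        intro h; have := hsmall g h; omega
      refine ⟨?_, ?_, ?_⟩
      · rw [hset, Finset.sum_insert hgnot, IH1]; omega
      · intro j hj
        rw [hset] at hj ⊢
        simp only [Finset.mem_insert] at hj ⊢
        push_neg
        rcases hj with rfl | hj
        · constructor
          · omega
          · intro h; have := hsmall _ h; omega
        · constructor
          · have := hsmall _ hj; omega
          · exact IH2 j hj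
      · intro j hj
        rw [hset] at hj
        simp only [Finset.mem_insert] at hj
        rcases hj with rfl | hj
        · exact hPg
        · have := IH3 j hj; omega

lemma zeck_sum (n : ℕ) : ∑ j ∈ zeckSet n, F (j:ℤ) = n := (zeck_spec n).1
lemma zeck_nc (n : ℕ) : ∀ j ∈ zeckSet n, j+1 ∉ zeckSet n := (zeck_spec n).2.1
lemma zeck_le (n : ℕ) : ∀ j ∈ zeckSet n, F (j:ℤ) ≤ n := (zeck_spec n).2.2

-- the central bound
lemma B1 (k : ℕ) : ∀ (S : Finset ℕ), (∀ j ∈ S, j+1 ∉ S) → (∀ j ∈ S, j < k) →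
    ∀ c : ℕ, ∑ j ∈ S, F ((j:ℤ)+c) < F ((k:ℤ)+c) := by
  induction k using Nat.strong_induction_on with
  | _ k IH =>
    intro S hnc hlt c
    rcases S.eq_empty_or_nonempty with rfl | hne
    · simpa using F_pos ((k:ℤ)+c) (by omega)
    · set t := S.max' hne with ht
      have htS : t ∈ S := S.max'_mem hne
      have htk : t < k := hlt t htS
      have hS' : ∀ j ∈ S.erase t, j < t := by
        intro j hj
        have hj1 := Finset.mem_of_mem_erase hj
        have := Finset.le_max' S j hj1
        have := Finset.ne_of_mem_erase hj
        omega
      rcases Nat.eq_zero_or_pos t with ht0 | ht1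
      · have hSe : S = {0} := by
          apply Finset.eq_singleton_iff_unique_mem.2
          refine ⟨by rwa [← ht0], fun j hj => by have := Finset.le_max' S j hj; omega⟩
        rw [hSe]
        simp only [Finset.sum_singleton, Nat.cast_zero, zero_add]
        exact F_strictMono (by omega) (by omega)
      · have hS'' : ∀ j ∈ S.erase t, j < t - 1 := by
          intro j hj
          have h1 := hS' j hj
          have h2 : j ≠ t - 1 := by
            intro h
            have : j + 1 ∈ S := by rw [h]; rwa [Nat.sub_add_cancel ht1]
            exact hnc j (Finset.mem_of_mem_erase hj) this
          omega
        have hrec := IH (t-1) (by omega) (S.erase t)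
          (fun j hj => fun h => hnc j (Finset.mem_of_mem_erase hj) (Finset.mem_of_mem_erase h))
          hS'' c
        have hsplit : ∑ j ∈ S, F ((j:ℤ)+c) = F ((t:ℤ)+c) + ∑ j ∈ S.erase t, F ((j:ℤ)+c) :=
          (Finset.add_sum_erase _ _ htS).symm
        have hadd : F ((t:ℤ)+1+c) = F ((t:ℤ)+c) + F (((t-1:ℕ):ℤ)+c) := by
          rw [F_add ((t:ℤ)+1+c) (by omega)]
          congr 2 <;> push_cast <;> omega
        have hmono : F ((t:ℤ)+1+c) ≤ F ((k:ℤ)+c) := F_mono (by omega)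
        omega

lemma zeck_unique : ∀ (n : ℕ) (S : Finset ℕ), (∀ j ∈ S, j+1 ∉ S) →
    (∑ j ∈ S, F (j:ℤ) = n) → zeckSet n = S := by
  intro n
  induction n using Nat.strong_induction_on with
  | _ n IH =>
    intro S hnc hsum
    rcases Nat.eq_zero_or_pos n with rfl | hn
    · rcases S.eq_empty_or_nonempty with rfl | ⟨x, hx⟩
      · exact zeckSet_zero
      · exfalso
        have h1 : 0 < F (x:ℤ) := F_pos _ (by omega)
        have h2 : F (x:ℤ) ≤ ∑ j ∈ S, F (j:ℤ) :=
          Finset.single_le_sum (f := fun j : ℕ => F (j:ℤ)) (fun i _ => Nat.zero_le _) hx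
        omega
    · have hSne : S.Nonempty := by
        rcases S.eq_empty_or_nonempty with rfl | h
        · simp at hsum; omega
        · exact h
      set k := S.max' hSne with hk
      have hkS : k ∈ S := S.max'_mem hSne
      have hFk : F (k:ℤ) ≤ n := by
        rw [← hsum]
        exact Finset.single_le_sum (f := fun j : ℕ => F (j:ℤ)) (fun i _ => Nat.zero_le _) hkS
      have hub : n < F ((k:ℤ)+1) := by
        rw [← hsum]
        have := B1 (k+1) S hnc (fun j hj => by have := Finset.le_max' S j hj; omega) 0
        push_cast at this
        simpa using this
      have hkn : k < n := by have := F_ge k; omega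
      obtain ⟨n', rfl⟩ : ∃ n', n = n' + 1 := ⟨n - 1, by omega⟩
      have hfg : Nat.findGreatest (fun i => F (i:ℤ) ≤ n' + 1) (n' + 1) = k := by
        rw [Nat.findGreatest_eq_iff]
        refine ⟨by omega, fun _ => hFk, ?_⟩
        intro i hik hin hFi
        have : F ((k:ℤ)+1) ≤ F (i:ℤ) := F_mono (by omega)
        omega
      have hres : zeckSet (n'+1) = insert k (zeckSet (n'+1 - F (k:ℤ))) := by
        rw [zeckSet, hfg]
      have hsum' : ∑ j ∈ S.erase k, F (j:ℤ) = n'+1 - F (k:ℤ) := by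
        have := (Finset.add_sum_erase _ (fun j : ℕ => F (j:ℤ)) hkS).symm
        omega
      have hrec := IH (n'+1 - F (k:ℤ)) (by have := F_pos (k:ℤ) (by omega); omega)
        (S.erase k)
        (fun j hj h => hnc j (Finset.mem_of_mem_erase hj) (Finset.mem_of_mem_erase h))
        hsum'
      rw [hres, hrec, Finset.insert_erase hkS]

lemma zeck_lt_F_iff (n k : ℕ) : n < F (k:ℤ) ↔ ∀ j ∈ zeckSet n, j < k := by
  constructor
  · intro h j hj
    have h1 := zeck_le n j hj
    by_contra h2
    have := F_mono (show (k:ℤ) ≤ j by omega)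
    omega
  · intro h
    have := B1 k (zeckSet n) (zeck_nc n) h 0
    push_cast at this
    simp only [add_zero] at this
    rw [zeck_sum n] at this
    exact this

lemma exists_top {S T : Finset ℕ} (h : S ≠ T) :
    ∃ k, ((k ∈ T ∧ k ∉ S) ∨ (k ∈ S ∧ k ∉ T)) ∧ ∀ j, k < j → (j ∈ S ↔ j ∈ T) := by
  set D := (S \ T) ∪ (T \ S) with hD
  have hne : D.Nonempty := by
    rcases Finset.eq_empty_or_nonempty D with he | hne
    · exfalso
      apply h
      apply Finset.Subset.antisymm <;> intro x hx <;> by_contra hx2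
      · have : x ∈ D := by rw [hD]; simp [hx, hx2]
        rw [he] at this; simp at this
      · have : x ∈ D := by rw [hD]; simp [hx, hx2]
        rw [he] at this; simp at this
    · exact hne
  refine ⟨D.max' hne, ?_, ?_⟩
  · have h2 : D.max' hne ∈ S \ T ∪ T \ S := D.max'_mem hne
    simp only [Finset.mem_union, Finset.mem_sdiff] at h2
    tauto
  · intro j hj
    have hnotin : j ∉ D := by
      intro hjD
      have := Finset.le_max' D j hjD
      omega
    have hnotin2 : j ∉ S \ T ∪ T \ S := hnotin
    clear hnotin
    have hnotin := hnotin2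
    simp only [Finset.mem_union, Finset.mem_sdiff] at hnotin
    push_neg at hnotin
    constructor
    · intro hjS; by_contra hjT; exact hjT (hnotin.1 hjS)
    · intro hjT; by_contra hjS; exact hjS (hnotin.2 hjT)

lemma key_lt {S T : Finset ℕ} (hS : ∀ j ∈ S, j+1 ∉ S) (k : ℕ)
    (hkT : k ∈ T) (hkS : k ∉ S) (hagree : ∀ j, k < j → (j ∈ S ↔ j ∈ T)) (c : ℕ) :
    ∑ j ∈ S, F ((j:ℤ)+c) < ∑ j ∈ T, F ((j:ℤ)+c) := by
  rw [← Finset.sum_filter_add_sum_filter_not S (fun j => k < j),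
      ← Finset.sum_filter_add_sum_filter_not T (fun j => k < j)]
  have hhigh : S.filter (fun j => k < j) = T.filter (fun j => k < j) := by
    ext j
    simp only [Finset.mem_filter]
    constructor
    · rintro ⟨h1, h2⟩; exact ⟨(hagree j h2).1 h1, h2⟩
    · rintro ⟨h1, h2⟩; exact ⟨(hagree j h2).2 h1, h2⟩
  rw [hhigh]
  have hlowS : ∑ j ∈ S.filter (fun j => ¬ k < j), F ((j:ℤ)+c) < F ((k:ℤ)+c) := by
    apply B1
    · intro j hj hj2
      exact hS j (Finset.mem_filter.1 hj).1 (Finset.mem_filter.1 hj2).1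
    · intro j hj
      have h1 := (Finset.mem_filter.1 hj).2
      have h2 : j ≠ k := by rintro rfl; exact hkS (Finset.mem_filter.1 hj).1
      omega
  have hlowT : F ((k:ℤ)+c) ≤ ∑ j ∈ T.filter (fun j => ¬ k < j), F ((j:ℤ)+c) := by
    apply Finset.single_le_sum (f := fun j : ℕ => F ((j:ℤ)+c)) (fun i _ => Nat.zero_le _)
    simp [hkT]
  omega

lemma sum_shift_lt {a a' : ℕ} (h : a < a') (c : ℕ) :
    ∑ j ∈ zeckSet a, F ((j:ℤ)+c) < ∑ j ∈ zeckSet a', F ((j:ℤ)+c) := by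
  have hne : zeckSet a ≠ zeckSet a' := by
    intro he
    have := zeck_sum a
    rw [he, zeck_sum a'] at this
    omega
  obtain ⟨k, hk, hagree⟩ := exists_top hne
  rcases hk with ⟨h1, h2⟩ | ⟨h1, h2⟩
  · exact key_lt (zeck_nc a) k h1 h2 hagree c
  · exfalso
    have := key_lt (zeck_nc a') k h1 h2 (fun j hj => (hagree j hj).symm) 0
    push_cast at this
    simp only [add_zero] at this
    rw [zeck_sum a, zeck_sum a'] at this
    omega

lemma zshift_eq_sum (a : ℕ) : zshift a 1 = ∑ j ∈ zeckSet a, F ((j:ℤ)+(1:ℕ)) := by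
  unfold zshift; push_cast; rfl

lemma zshift_lt {a a' : ℕ} (h : a < a') : zshift a 1 < zshift a' 1 := by
  rw [zshift_eq_sum, zshift_eq_sum]
  exact sum_shift_lt h 1

lemma zshift_le {a a' : ℕ} (h : a ≤ a') : zshift a 1 ≤ zshift a' 1 := by
  rcases Nat.lt_or_ge a a' with h1 | h1
  · exact le_of_lt (zshift_lt h1)
  · have : a = a' := by omega
    rw [this]

lemma zshift_lt_iff {a a' : ℕ} : zshift a 1 < zshift a' 1 ↔ a < a' := by
  constructor
  · intro h
    by_contra h2
    push_neg at h2
    have := zshift_le h2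
    omega
  · exact zshift_lt

lemma zeckSet_F (l : ℕ) : zeckSet (F (l:ℤ)) = {l} := by
  apply zeck_unique
  · intro j hj
    simp only [Finset.mem_singleton] at hj ⊢
    omega
  · simp

lemma zshift_F (l : ℕ) : zshift (F (l:ℤ)) 1 = F ((l:ℤ)+1) := by
  unfold zshift
  rw [zeckSet_F]
  simp

lemma zeckSet_zshift (a : ℕ) : zeckSet (zshift a 1) = (zeckSet a).image (· + 1) := by
  apply zeck_unique
  · intro j hj hj2
    simp only [Finset.mem_image] at hj hj2
    obtain ⟨i, hi, rfl⟩ := hj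
    obtain ⟨i', hi', he⟩ := hj2
    have : i' = i + 1 := by omega
    subst this
    exact zeck_nc a i hi hi'
  · rw [Finset.sum_image (by intro x _ y _ h; simp only at h; omega)]
    unfold zshift
    apply Finset.sum_congr rfl
    intro j _
    norm_cast

lemma zero_not_mem_zshift (a : ℕ) : 0 ∉ zeckSet (zshift a 1) := by
  rw [zeckSet_zshift]
  simp

lemma one_mem_zshift_iff (a : ℕ) : 1 ∈ zeckSet (zshift a 1) ↔ 0 ∈ zeckSet a := by
  rw [zeckSet_zshift]
  simp

-- L3
lemma zeckSet_succ_of (n : ℕ) (h0 : 0 ∉ zeckSet n) (h1 : 1 ∉ zeckSet n) :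
    zeckSet (n+1) = insert 0 (zeckSet n) := by
  apply zeck_unique
  · intro j hj
    simp only [Finset.mem_insert] at hj ⊢
    push_neg
    rcases hj with rfl | hj
    · exact ⟨by omega, h1⟩
    · exact ⟨by omega, zeck_nc n j hj⟩
  · rw [Finset.sum_insert h0]
    rw [zeck_sum n]
    simp [F]
    omega

-- L1/L2
lemma zero_mem_succ (n : ℕ) (h : 0 ∈ zeckSet (n+1)) :
    0 ∉ zeckSet n ∧ 1 ∉ zeckSet n := by
  have h1 : 1 ∉ zeckSet (n+1) := zeck_nc (n+1) 0 h
  have he : zeckSet n = (zeckSet (n+1)).erase 0 := by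
    apply zeck_unique
    · intro j hj hj2
      exact zeck_nc (n+1) j (Finset.mem_of_mem_erase hj) (Finset.mem_of_mem_erase hj2)
    · have := (Finset.add_sum_erase _ (fun j : ℕ => F (j:ℤ)) h).symm
      have hz : F ((0:ℕ):ℤ) = 1 := rfl
      rw [zeck_sum (n+1)] at this
      omega
  rw [he]
  constructor
  · simp
  · intro hc
    exact h1 (Finset.mem_of_mem_erase hc)

lemma exists_zshift (c : ℕ) (h0 : 0 ∉ zeckSet c) : ∃ a, zshift a 1 = c := by
  classical
  set T := (zeckSet c).image (· - 1) with hT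
  have hmem : ∀ j ∈ zeckSet c, 1 ≤ j := by
    intro j hj
    rcases Nat.eq_zero_or_pos j with rfl | h
    · exact absurd hj h0
    · omega
  have hinj : ∀ x ∈ zeckSet c, ∀ y ∈ zeckSet c, x - 1 = y - 1 → x = y := by
    intro x hx y hy h
    have := hmem x hx
    have := hmem y hy
    omega
  have hset : zeckSet (∑ j ∈ T, F (j:ℤ)) = T := by
    apply zeck_unique
    · intro j hj hj2
      rw [hT] at hj hj2
      simp only [Finset.mem_image] at hj hj2
      obtain ⟨i, hi, rfl⟩ := hj
      obtain ⟨i', hi', he⟩ := hj2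
      have h1 := hmem i hi
      have h1' := hmem i' hi'
      have : i' = i + 1 := by omega
      subst this
      exact zeck_nc c i hi hi'
    · rfl
  refine ⟨∑ j ∈ T, F (j:ℤ), ?_⟩
  unfold zshift
  rw [hset, hT, Finset.sum_image hinj]
  have heq : ∑ x ∈ zeckSet c, F ((((x-1):ℕ):ℤ) + 1) = ∑ x ∈ zeckSet c, F (x:ℤ) := by
    apply Finset.sum_congr rfl
    intro j hj
    have := hmem j hj
    congr 1
    omega
  rw [heq, zeck_sum c]

-- successor lemmas
lemma zshift_succ_of_one (a : ℕ) (h : 0 ∈ zeckSet a) :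
    zshift (a+1) 1 = zshift a 1 + 1 := by
  set b := zshift a 1 with hb
  have h1b : 1 ∈ zeckSet b := (one_mem_zshift_iff a).2 h
  have h0b1 : 0 ∉ zeckSet (b+1) := by
    intro hc
    exact (zero_mem_succ b hc).2 h1b
  obtain ⟨a', ha'⟩ := exists_zshift (b+1) h0b1
  have haa' : a < a' := by
    rw [← zshift_lt_iff, ha']
    omega
  have h1 : zshift (a+1) 1 ≤ b + 1 := by
    rw [← ha']
    exact zshift_le (by omega)
  have h2 : b < zshift (a+1) 1 := zshift_lt (by omega)
  omega

lemma zshift_succ_of_zero (a : ℕ) (h : 0 ∉ zeckSet a) :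
    zshift (a+1) 1 = zshift a 1 + 2 ∧ zeckSet (zshift a 1 + 1) = insert 0 (zeckSet (zshift a 1)) := by
  set b := zshift a 1 with hb
  have h0b : 0 ∉ zeckSet b := zero_not_mem_zshift a
  have h1b : 1 ∉ zeckSet b := fun hc => h ((one_mem_zshift_iff a).1 hc)
  have hins : zeckSet (b+1) = insert 0 (zeckSet b) := zeckSet_succ_of b h0b h1b
  have h0b1 : 0 ∈ zeckSet (b+1) := by rw [hins]; simp
  have h0b2 : 0 ∉ zeckSet (b+2) := by
    intro hc
    exact (zero_mem_succ (b+1) hc).1 h0b1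
  obtain ⟨a', ha'⟩ := exists_zshift (b+2) h0b2
  have haa' : a < a' := by
    rw [← zshift_lt_iff, ha']
    omega
  have h1 : zshift (a+1) 1 ≤ b + 2 := by
    rw [← ha']
    exact zshift_le (by omega)
  have h2 : b < zshift (a+1) 1 := zshift_lt (by omega)
  have h3 : zshift (a+1) 1 ≠ b + 1 := by
    intro hc
    have := zero_not_mem_zshift (a+1)
    rw [hc, hins] at this
    simp at this
  exact ⟨by omega, hins⟩

lemma phi_eq : phi = Real.goldenRatio := rfl
lemma phi_pos : 0 < phi := by rw [phi_eq]; exact Real.goldenRatio_pos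
lemma one_lt_phi : 1 < phi := by rw [phi_eq]; exact Real.one_lt_goldenRatio
lemma phi_sq : phi^2 = phi + 1 := by rw [phi_eq]; exact Real.goldenRatio_sq

lemma phi_pow_add (t : ℕ) : phi^(t+2) = phi^(t+1) + phi^t := by
  have : phi^(t+2) = phi^t * phi^2 := by ring
  rw [this, phi_sq]
  ring

lemma B1phi (k : ℕ) : ∀ (S : Finset ℕ), (∀ j ∈ S, j+1 ∉ S) → (∀ j ∈ S, j < k) →
    ∑ j ∈ S, phi ^ j < phi ^ k := by
  induction k using Nat.strong_induction_on with
  | _ k IH =>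
    intro S hnc hlt
    rcases S.eq_empty_or_nonempty with rfl | hne
    · simp
      have := phi_pos
      positivity
    · set t := S.max' hne with ht
      have htS : t ∈ S := S.max'_mem hne
      have htk : t < k := hlt t htS
      have hS' : ∀ j ∈ S.erase t, j < t := by
        intro j hj
        have hj1 := Finset.mem_of_mem_erase hj
        have := Finset.le_max' S j hj1
        have := Finset.ne_of_mem_erase hj
        omega
      have hmono : phi^(t+1) ≤ phi^k := pow_le_pow_right₀ (le_of_lt one_lt_phi) (by omega)
      rcases Nat.eq_zero_or_pos t with ht0 | ht1
      · have hSe : S = {0} := by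
          apply Finset.eq_singleton_iff_unique_mem.2
          refine ⟨by rwa [← ht0], fun j hj => by have := Finset.le_max' S j hj; omega⟩
        rw [hSe]
        simp only [Finset.sum_singleton, pow_zero]
        calc (1:ℝ) < phi := one_lt_phi
        _ = phi ^ 1 := (pow_one phi).symm
        _ ≤ phi ^ k := pow_le_pow_right₀ (le_of_lt one_lt_phi) (by omega)
      · have hS'' : ∀ j ∈ S.erase t, j < t - 1 := by
          intro j hj
          have h1 := hS' j hj
          have h2 : j ≠ t - 1 := by
            intro h
            have : j + 1 ∈ S := by rw [h]; rwa [Nat.sub_add_cancel ht1]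
            exact hnc j (Finset.mem_of_mem_erase hj) this
          omega
        have hrec := IH (t-1) (by omega) (S.erase t)
          (fun j hj h => hnc j (Finset.mem_of_mem_erase hj) (Finset.mem_of_mem_erase h))
          hS''
        have hsplit : ∑ j ∈ S, phi^j = phi^t + ∑ j ∈ S.erase t, phi^j :=
          (Finset.add_sum_erase _ _ htS).symm
        have hadd : phi^(t+1) = phi^t + phi^(t-1) := by
          have h2 : t - 1 + 2 = t + 1 := by omega
          have h1 : t - 1 + 1 = t := by omega
          have := phi_pow_add (t-1)
          rw [h2, h1] at this
          exact this
        rw [hsplit]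
        calc phi^t + ∑ j ∈ S.erase t, phi^j < phi^t + phi^(t-1) := by linarith
        _ = phi^(t+1) := hadd.symm
        _ ≤ phi^k := hmono

lemma keyphi_lt {S T : Finset ℕ} (hS : ∀ j ∈ S, j+1 ∉ S) (k : ℕ)
    (hkT : k ∈ T) (hkS : k ∉ S) (hagree : ∀ j, k < j → (j ∈ S ↔ j ∈ T)) :
    ∑ j ∈ S, phi ^ j < ∑ j ∈ T, phi ^ j := by
  rw [← Finset.sum_filter_add_sum_filter_not S (fun j => k < j),
      ← Finset.sum_filter_add_sum_filter_not T (fun j => k < j)]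
  have hhigh : S.filter (fun j => k < j) = T.filter (fun j => k < j) := by
    ext j
    simp only [Finset.mem_filter]
    constructor
    · rintro ⟨h1, h2⟩; exact ⟨(hagree j h2).1 h1, h2⟩
    · rintro ⟨h1, h2⟩; exact ⟨(hagree j h2).2 h1, h2⟩
  rw [hhigh]
  have hlowS : ∑ j ∈ S.filter (fun j => ¬ k < j), phi^j < phi^k := by
    apply B1phi
    · intro j hj hj2
      exact hS j (Finset.mem_filter.1 hj).1 (Finset.mem_filter.1 hj2).1
    · intro j hj
      have h1 := (Finset.mem_filter.1 hj).2
      have h2 : j ≠ k := by rintro rfl; exact hkS (Finset.mem_filter.1 hj).1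
      omega
  have hlowT : phi^k ≤ ∑ j ∈ T.filter (fun j => ¬ k < j), phi^j := by
    apply Finset.single_le_sum (f := fun j : ℕ => phi^j)
    · intro i _
      have := phi_pos
      positivity
    · simp [hkT]
  linarith

lemma zbar_lt {a a' : ℕ} (h : a < a') : zbar a < zbar a' := by
  have hne : zeckSet a ≠ zeckSet a' := by
    intro he
    have := zeck_sum a
    rw [he, zeck_sum a'] at this
    omega
  obtain ⟨k, hk, hagree⟩ := exists_top hne
  unfold zbar
  rcases hk with ⟨h1, h2⟩ | ⟨h1, h2⟩
  · exact keyphi_lt (zeck_nc a) k h1 h2 hagree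
  · exfalso
    have := key_lt (zeck_nc a') k h1 h2 (fun j hj => (hagree j hj).symm) 0
    push_cast at this
    simp only [add_zero] at this
    rw [zeck_sum a, zeck_sum a'] at this
    omega

lemma zbar_le {a a' : ℕ} (h : a ≤ a') : zbar a ≤ zbar a' := by
  rcases Nat.lt_or_ge a a' with h1 | h1
  · exact le_of_lt (zbar_lt h1)
  · have h2 : a = a' := by omega
    rw [h2]

lemma zbar_zero : zbar 0 = 0 := by
  unfold zbar
  rw [zeckSet_zero]
  simp

lemma zbar_nonneg (a : ℕ) : 0 ≤ zbar a := by
  rw [← zbar_zero]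
  exact zbar_le (Nat.zero_le a)

lemma zbar_F (l : ℕ) : zbar (F (l:ℤ)) = phi ^ l := by
  unfold zbar
  rw [zeckSet_F]
  simp

lemma zbar_lt_pow {a : ℕ} {l : ℕ} (h : a < F (l:ℤ)) : zbar a < phi ^ l := by
  rw [← zbar_F]
  exact zbar_lt h

lemma zbar_le_pow {a : ℕ} {l : ℕ} (h : a ≤ F (l:ℤ)) : zbar a ≤ phi ^ l := by
  rw [← zbar_F]
  exact zbar_le h

lemma zbar_zshift (a : ℕ) : zbar (zshift a 1) = phi * zbar a := by
  unfold zbar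
  rw [zeckSet_zshift, Finset.sum_image (by intro x _ y _ h; simp only at h; omega), Finset.mul_sum]
  apply Finset.sum_congr rfl
  intro j _
  ring

lemma fib_conv_eq (l : ℕ) (t : ℤ) (h : -1 ≤ t) :
    F (l:ℤ) * F t + F ((l:ℤ)-1) * F (t-1) = F (t + l + 1) := by
  obtain ⟨u, hu⟩ : ∃ u : ℕ, t + 1 = u := ⟨(t+1).toNat, by omega⟩
  have h1 : F t = Nat.fib (u+1) := by unfold F; congr 1; try omega
  have h2 : F (t-1) = Nat.fib u := by unfold F; congr 1; try omega
  have h3 : F (l:ℤ) = Nat.fib (l+2) := by unfold F; congr 1; try omega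
  have h4 : F ((l:ℤ)-1) = Nat.fib (l+1) := by unfold F; congr 1; try omega
  have h5 : F (t + l + 1) = Nat.fib (u + (l+1) + 1) := by unfold F; congr 1; try omega
  rw [h1, h2, h3, h4, h5, Nat.fib_add u (l+1)]
  ring

lemma fib_conv_le (l : ℕ) (t : ℤ) :
    F (l:ℤ) * F t + F ((l:ℤ)-1) * F (t-1) ≤ F (t + l + 1) := by
  rcases le_or_gt (-1) t with h | h
  · exact le_of_eq (fib_conv_eq l t h)
  · have h1 : F t = 0 := F_neg _ (by omega)
    have h2 : F (t-1) = 0 := F_neg _ (by omega)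
    rw [h1, h2]
    simp

lemma zd0_zero : zd0 0 = 0 := by unfold zd0; rw [zeckSet_zero]; simp

-- counting digits
lemma card_zero_digit (l : ℕ) :
    ((Finset.range (F ((l:ℤ)+1))).filter (fun c => zd0 c = 0)).card = F (l:ℤ) := by
  have hs : (Finset.range (F ((l:ℤ)+1))).filter (fun c => zd0 c = 0)
      = (Finset.range (F (l:ℤ))).image (fun a => zshift a 1) := by
    ext c
    simp only [Finset.mem_filter, Finset.mem_range, Finset.mem_image]
    constructor
    · rintro ⟨hlt, hz⟩
      have h0 : 0 ∉ zeckSet c := by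
        intro hc; unfold zd0 at hz; rw [if_pos hc] at hz; omega
      obtain ⟨a, ha⟩ := exists_zshift c h0
      refine ⟨a, ?_, ha⟩
      rw [← zshift_lt_iff, ha, zshift_F l]
      exact hlt
    · rintro ⟨a, ha, rfl⟩
      constructor
      · calc zshift a 1 < zshift (F (l:ℤ)) 1 := zshift_lt ha
        _ = F ((l:ℤ)+1) := zshift_F l
      · unfold zd0
        rw [if_neg (zero_not_mem_zshift a)]
  rw [hs, Finset.card_image_of_injective _ ?_, Finset.card_range]
  intro x y h
  have h' : zshift x 1 = zshift y 1 := h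
  rcases lt_trichotomy x y with h1 | h1 | h1
  · have := zshift_lt h1; omega
  · exact h1
  · have := zshift_lt h1; omega

lemma zd0_eq_or (c : ℕ) : zd0 c = 0 ∨ zd0 c = 1 := by
  unfold zd0; split <;> simp

lemma sum_digit_weight (l : ℕ) (X : ℤ) :
    ∑ c ∈ Finset.range (F ((l:ℤ)+1)), F (X - (zd0 c : ℤ))
      = F (l:ℤ) * F X + F ((l:ℤ)-1) * F (X-1) := by
  rw [← Finset.sum_filter_add_sum_filter_not (Finset.range (F ((l:ℤ)+1))) (fun c => zd0 c = 0)]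
  have h1 : ∑ c ∈ (Finset.range (F ((l:ℤ)+1))).filter (fun c => zd0 c = 0), F (X - (zd0 c:ℤ))
      = F (l:ℤ) * F X := by
    rw [Finset.sum_congr rfl (fun c hc => ?_), Finset.sum_const, card_zero_digit, smul_eq_mul]
    have := (Finset.mem_filter.1 hc).2
    rw [this]
    norm_num
  have hcard1 : ((Finset.range (F ((l:ℤ)+1))).filter (fun c => ¬ zd0 c = 0)).card
      = F ((l:ℤ)-1) := by
    have := Finset.card_filter_add_card_filter_not
      (s := Finset.range (F ((l:ℤ)+1))) (p := fun c => zd0 c = 0)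
    rw [card_zero_digit, Finset.card_range] at this
    have hF : F ((l:ℤ)+1) = F (l:ℤ) + F ((l:ℤ)-1) := by
      have h5 := F_add ((l:ℤ)+1) (by omega)
      have h6 : (l:ℤ)+1-1 = l := by ring
      have h7 : (l:ℤ)+1-2 = l-1 := by ring
      rwa [h6, h7] at h5
    omega
  have h2 : ∑ c ∈ (Finset.range (F ((l:ℤ)+1))).filter (fun c => ¬ zd0 c = 0), F (X - (zd0 c:ℤ))
      = F ((l:ℤ)-1) * F (X-1) := by
    rw [Finset.sum_congr rfl (fun c hc => ?_), Finset.sum_const, hcard1, smul_eq_mul]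
    have h3 := (Finset.mem_filter.1 hc).2
    rcases zd0_eq_or c with h4 | h4
    · exact absurd h4 h3
    · rw [h4]; norm_num
  rw [h1, h2]

lemma cell_exists_aux (y : ℝ) : ∀ N : ℕ, 0 ≤ y → y < zbar N →
    ∃ c, c < N ∧ zbar c ≤ y ∧ y < zbar (c+1) := by
  intro N
  induction N with
  | zero => intro h0 h1; rw [zbar_zero] at h1; exact absurd h1 (by linarith)
  | succ N IH =>
    intro h0 h1
    rcases le_or_gt (zbar N) y with h | h
    · exact ⟨N, by omega, h, h1⟩
    · rcases Nat.eq_zero_or_pos N with rfl | hN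
      · rw [zbar_zero] at h; linarith
      · obtain ⟨c, hc1, hc2, hc3⟩ := IH h0 h
        exact ⟨c, by omega, hc2, hc3⟩

lemma cell_exists (l : ℕ) (x : ℝ) (h0 : 0 ≤ x) (h1 : x < 1) :
    ∃ c, c < F (l:ℤ) ∧ x ∈ Set.Ico (zbar c / phi^l) (zbar (c+1) / phi^l) := by
  have hppos : (0:ℝ) < phi^l := pow_pos phi_pos l
  have hy1 : x * phi^l < zbar (F (l:ℤ)) := by
    rw [zbar_F]
    nlinarith
  obtain ⟨c, hc1, hc2, hc3⟩ := cell_exists_aux (x * phi^l) (F (l:ℤ)) (by positivity) hy1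
  refine ⟨c, hc1, ?_, ?_⟩
  · rw [div_le_iff₀ hppos]; linarith
  · rw [lt_div_iff₀ hppos]; linarith

lemma cell_unique (l : ℕ) (x : ℝ) (c c' : ℕ)
    (h : x ∈ Set.Ico (zbar c / phi^l) (zbar (c+1) / phi^l))
    (h' : x ∈ Set.Ico (zbar c' / phi^l) (zbar (c'+1) / phi^l)) : c = c' := by
  have hppos : (0:ℝ) < phi^l := pow_pos phi_pos l
  by_contra hne
  rcases Nat.lt_or_ge c c' with hlt | hge
  · have h1 : zbar (c+1) ≤ zbar c' := zbar_le (by omega)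
    have h2 : zbar (c+1) / phi^l ≤ zbar c' / phi^l := by gcongr
    have := h.2
    have := h'.1
    linarith
  · have hlt : c' < c := by omega
    have h1 : zbar (c'+1) ≤ zbar c := zbar_le (by omega)
    have h2 : zbar (c'+1) / phi^l ≤ zbar c / phi^l := by gcongr
    have := h'.2
    have := h.1
    linarith

noncomputable def cellIdx (l : ℕ) (x : ℝ) : ℕ :=
  if h : ∃ c, c < F (l:ℤ) ∧ x ∈ Set.Ico (zbar c / phi^l) (zbar (c+1) / phi^l)
  then h.choose else 0

lemma cellIdx_spec (l : ℕ) (x : ℝ) (h0 : 0 ≤ x) (h1 : x < 1) :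
    cellIdx l x < F (l:ℤ) ∧
      x ∈ Set.Ico (zbar (cellIdx l x) / phi^l) (zbar (cellIdx l x + 1) / phi^l) := by
  have h := cell_exists l x h0 h1
  unfold cellIdx
  rw [dif_pos h]
  exact h.choose_spec

lemma cellIdx_eq (l : ℕ) (x : ℝ) (c : ℕ) (h0 : 0 ≤ x) (h1 : x < 1)
    (h : x ∈ Set.Ico (zbar c / phi^l) (zbar (c+1) / phi^l)) : cellIdx l x = c :=
  cell_unique l x _ c (cellIdx_spec l x h0 h1).2 h

open Classical in
lemma natcard_eq_filter {N : ℕ} (p : Fin N → Prop) :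
    Nat.card {i : Fin N // p i} = (Finset.univ.filter p).card := by
  classical
  rw [Nat.card_eq_fintype_card, Fintype.card_subtype]

lemma natcard_or {N : ℕ} (p q : Fin N → Prop) (hdisj : ∀ i, ¬(p i ∧ q i)) :
    Nat.card {i : Fin N // p i ∨ q i} = Nat.card {i // p i} + Nat.card {i // q i} := by
  classical
  rw [natcard_eq_filter, natcard_eq_filter, natcard_eq_filter,
    ← Finset.card_union_of_disjoint (s := Finset.univ.filter p) (t := Finset.univ.filter q) ?_]
  · congr 1
    ext i
    simp only [Finset.mem_filter, Finset.mem_univ, true_and, Finset.mem_union]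
  · rw [Finset.disjoint_left]
    intro i h1 h2
    rw [Finset.mem_filter] at h1 h2
    exact hdisj i ⟨h1.2, h2.2⟩

lemma Ico_split {lo mid hi x : ℝ} (h1 : lo ≤ mid) (h2 : mid ≤ hi) :
    x ∈ Set.Ico lo hi ↔ (x ∈ Set.Ico lo mid ∨ x ∈ Set.Ico mid hi) := by
  simp only [Set.mem_Ico]
  constructor
  · rintro ⟨ha, hb⟩
    rcases lt_or_ge x mid with h | h
    · exact Or.inl ⟨ha, h⟩
    · exact Or.inr ⟨h, hb⟩
  · rintro (⟨ha, hb⟩ | ⟨ha, hb⟩)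
    · exact ⟨ha, by linarith⟩
    · exact ⟨by linarith, hb⟩

lemma sum_piFinset_peel {s : ℕ} (B : Fin s → Finset ℕ) (j0 : Fin s) (f : (Fin s → ℕ) → ℕ) :
    ∑ a ∈ Fintype.piFinset B, f a
      = ∑ a ∈ Fintype.piFinset (Function.update B j0 {0}),
          ∑ c ∈ B j0, f (Function.update a j0 c) := by
  classical
  rw [← Finset.sum_product']
  apply Finset.sum_nbij' (i := fun a => (Function.update a j0 0, a j0))
    (j := fun p => Function.update p.1 j0 p.2)
  · intro a ha
    simp only [Finset.mem_product, Fintype.mem_piFinset] at ha ⊢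
    constructor
    · intro j
      by_cases h : j = j0
      · subst h; simp [Function.update]
      · simp [Function.update, h, ha j]
    · exact ha j0
  · intro p hp
    simp only [Finset.mem_product, Fintype.mem_piFinset] at hp ⊢
    intro j
    by_cases h : j = j0
    · subst h; simpa [Function.update] using hp.2
    · have := hp.1 j
      simp only [Function.update, h] at this ⊢
      simpa [h] using this
  · intro a ha
    funext j
    by_cases h : j = j0
    · subst h; simp [Function.update]
    · simp [Function.update, h]
  · intro p hp
    simp only [Finset.mem_product, Fintype.mem_piFinset] at hp
    have h1 : p.1 j0 = 0 := by
      have := hp.1 j0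
      simpa [Function.update] using this
    have e1 : Function.update (Function.update p.1 j0 p.2) j0 0 = p.1 := by
      funext j
      by_cases h : j = j0
      · subst h; simp [Function.update, h1]
      · simp [Function.update, h]
    have e2 : Function.update p.1 j0 p.2 j0 = p.2 := by simp [Function.update]
    exact Prod.ext e1 e2
  · intro a ha
    have e : Function.update (Function.update a j0 0) j0 (a j0) = a := by
      rw [Function.update_idem, Function.update_eq_self]
    rw [e]

lemma piFinset_zero {s : ℕ} :
    Fintype.piFinset (fun _ : Fin s => ({0} : Finset ℕ)) = {fun _ => 0} := by
  ext a
  simp only [Fintype.mem_piFinset, Finset.mem_singleton]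
  constructor
  · intro h; funext j; exact h j
  · intro h j; rw [h]

def BB (s : ℕ) (mv : Fin s → ℕ) (A : Finset (Fin s)) : Fin s → Finset ℕ :=
  fun j => if j ∈ A then Finset.range (F (mv j)) else {0}

def expo (s m : ℕ) (mv : Fin s → ℕ) (A : Finset (Fin s)) (a : Fin s → ℕ) : ℤ :=
  (m:ℤ) - ∑ j ∈ A, ((mv j : ℤ) + (zd0 (a j) : ℤ))

def gg (s m : ℕ) (mv : Fin s → ℕ) (A : Finset (Fin s)) : ℕ :=
  ∑ a ∈ Fintype.piFinset (BB s mv A), F (expo s m mv A a)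

lemma BB_erase (s : ℕ) (mv : Fin s → ℕ) (A : Finset (Fin s)) (j0 : Fin s) :
    BB s mv (A.erase j0) = Function.update (BB s mv A) j0 {0} := by
  funext j
  by_cases h : j = j0
  · subst h
    simp [BB, Function.update]
  · simp [BB, Function.update, h, Finset.mem_erase]

lemma expo_update (s m : ℕ) (mv : Fin s → ℕ) (A : Finset (Fin s)) (j0 : Fin s)
    (hj0 : j0 ∈ A) (a : Fin s → ℕ) (c : ℕ) :
    expo s m mv A (Function.update a j0 c)
      = expo s m mv (A.erase j0) a - (mv j0 : ℤ) - (zd0 c : ℤ) := by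
  unfold expo
  have h1 : ∑ j ∈ A, ((mv j : ℤ) + (zd0 (Function.update a j0 c j) : ℤ))
      = ((mv j0 : ℤ) + (zd0 c : ℤ))
        + ∑ j ∈ A.erase j0, ((mv j : ℤ) + (zd0 (Function.update a j0 c j) : ℤ)) := by
    rw [← Finset.add_sum_erase _ _ hj0]
    simp [Function.update]
  rw [h1]
  have h2 : ∑ j ∈ A.erase j0, ((mv j : ℤ) + (zd0 (Function.update a j0 c j) : ℤ))
      = ∑ j ∈ A.erase j0, ((mv j : ℤ) + (zd0 (a j) : ℤ)) := by
    apply Finset.sum_congr rfl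
    intro j hj
    have : j ≠ j0 := Finset.ne_of_mem_erase hj
    simp [Function.update, this]
  rw [h2]
  ring

lemma gg_peel (s m : ℕ) (mv : Fin s → ℕ) (A : Finset (Fin s)) (j0 : Fin s) (hj0 : j0 ∈ A) :
    gg s m mv A = ∑ a ∈ Fintype.piFinset (BB s mv (A.erase j0)),
      ∑ c ∈ Finset.range (F (mv j0)),
        F (expo s m mv (A.erase j0) a - (mv j0 : ℤ) - (zd0 c : ℤ)) := by
  unfold gg
  rw [sum_piFinset_peel (BB s mv A) j0, ← BB_erase]
  apply Finset.sum_congr rfl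
  intro a _
  have hB : BB s mv A j0 = Finset.range (F (mv j0)) := by simp [BB, hj0]
  rw [hB]
  apply Finset.sum_congr rfl
  intro c _
  rw [expo_update s m mv A j0 hj0 a c]

lemma inner_le (l : ℕ) (X : ℤ) :
    ∑ c ∈ Finset.range (F ((l+1:ℕ) : ℤ)), F (X - ((l+1:ℕ) : ℤ) - (zd0 c : ℤ)) ≤ F X := by
  have hc : ((l+1:ℕ) : ℤ) = (l:ℤ)+1 := by push_cast; ring
  rw [hc, sum_digit_weight l (X - ((l:ℤ)+1))]
  have h := fib_conv_le l (X - ((l:ℤ)+1))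
  have he : X - ((l:ℤ)+1) + l + 1 = X := by ring
  rw [he] at h
  exact h

lemma inner_lt (l : ℕ) :
    ∑ c ∈ Finset.range (F ((l+1:ℕ) : ℤ)), F (((l:ℤ)-1) - ((l+1:ℕ) : ℤ) - (zd0 c : ℤ))
      < F ((l:ℤ)-1) := by
  have hc : ((l+1:ℕ) : ℤ) = (l:ℤ)+1 := by push_cast; ring
  rw [hc, sum_digit_weight l (((l:ℤ)-1) - ((l:ℤ)+1))]
  have e1 : ((l:ℤ)-1) - ((l:ℤ)+1) = -2 := by ring
  have e2 : (-2:ℤ) - 1 = -3 := by ring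
  rw [e1, e2, F_neg (-2) (by omega), F_neg (-3) (by omega)]
  simpa using F_pos ((l:ℤ)-1) (by omega)

lemma gg_le_erase (s m : ℕ) (mv : Fin s → ℕ) (A : Finset (Fin s)) (j0 : Fin s)
    (hj0 : j0 ∈ A) : gg s m mv A ≤ gg s m mv (A.erase j0) := by
  rw [gg_peel s m mv A j0 hj0]
  unfold gg
  apply Finset.sum_le_sum
  intro a _
  set X := expo s m mv (A.erase j0) a with hX
  rcases Nat.eq_zero_or_pos (mv j0) with h0 | h0
  · rw [h0]
    have : F ((0:ℕ):ℤ) = 1 := rfl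
    rw [this, Finset.sum_range_one, zd0_zero]
    push_cast
    simp
  · obtain ⟨l, hl⟩ : ∃ l, mv j0 = l + 1 := ⟨mv j0 - 1, by omega⟩
    rw [hl]
    exact inner_le l X

lemma gg_lt_erase (s m : ℕ) (mv : Fin s → ℕ) (A : Finset (Fin s)) (j0 : Fin s)
    (hj0 : j0 ∈ A) (l : ℕ) (hl : mv j0 = l + 1) (aw : Fin s → ℕ)
    (haw : aw ∈ Fintype.piFinset (BB s mv (A.erase j0)))
    (hbad : expo s m mv (A.erase j0) aw = (l:ℤ) - 1) :
    gg s m mv A < gg s m mv (A.erase j0) := by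
  rw [gg_peel s m mv A j0 hj0]
  unfold gg
  apply Finset.sum_lt_sum
  · intro a _
    rw [hl]
    exact inner_le l (expo s m mv (A.erase j0) a)
  · refine ⟨aw, haw, ?_⟩
    rw [hl, hbad]
    exact inner_lt l

lemma gg_empty (s m : ℕ) (mv : Fin s → ℕ) : gg s m mv ∅ = F m := by
  unfold gg
  have hB : BB s mv ∅ = fun _ => ({0} : Finset ℕ) := by
    funext j; simp [BB]
  rw [hB, piFinset_zero, Finset.sum_singleton]
  unfold expo
  simp

lemma gg_le_Fm (s m : ℕ) (mv : Fin s → ℕ) : ∀ A : Finset (Fin s), gg s m mv A ≤ F m := by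
  intro A
  induction A using Finset.strongInduction with
  | _ A IH =>
    rcases A.eq_empty_or_nonempty with rfl | ⟨j0, hj0⟩
    · rw [gg_empty]
    · calc gg s m mv A ≤ gg s m mv (A.erase j0) := gg_le_erase s m mv A j0 hj0
      _ ≤ F m := IH _ (Finset.erase_ssubset hj0)

lemma gg_univ (s m : ℕ) (P : Fin (F m) → Fin s → ℝ)
    (hP : ∀ i j, P i j ∈ Set.Ico (0 : ℝ) 1) (mv : Fin s → ℕ)
    (hstrong : ∀ a : Fin s → ℕ, (∀ j, a j < F (mv j)) →
      Nat.card {i : Fin (F m) //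
          ∀ j, P i j ∈ Set.Ico (zbar (a j) / phi ^ (mv j)) (zbar (a j + 1) / phi ^ (mv j))} =
        F ((m : ℤ) - ∑ j, ((mv j : ℤ) + (zd0 (a j) : ℤ)))) :
    gg s m mv Finset.univ = F m := by
  classical
  have hclass : ∀ i : Fin (F m),
      (fun j => cellIdx (mv j) (P i j)) ∈ Fintype.piFinset (BB s mv Finset.univ) := by
    intro i
    rw [Fintype.mem_piFinset]
    intro j
    simp only [BB, Finset.mem_univ, if_pos, Finset.mem_range]
    exact (cellIdx_spec (mv j) (P i j) (hP i j).1 (hP i j).2).1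
  have htot := Finset.card_eq_sum_card_fiberwise
    (f := fun i : Fin (F m) => (fun j => cellIdx (mv j) (P i j)))
    (s := Finset.univ)
    (t := Fintype.piFinset (BB s mv Finset.univ)) (fun i _ => hclass i)
  rw [Finset.card_univ, Fintype.card_fin] at htot
  unfold gg
  rw [htot]
  apply Finset.sum_congr rfl
  intro a ha
  have haj : ∀ j, a j < F (mv j) := by
    rw [Fintype.mem_piFinset] at ha
    intro j
    have := ha j
    simpa [BB] using this
  have h1 := hstrong a haj
  rw [natcard_eq_filter] at h1
  unfold expo
  rw [← h1]
  congr 1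
  ext i
  simp only [Finset.mem_filter, Finset.mem_univ, true_and]
  constructor
  · intro h
    funext j
    exact cellIdx_eq (mv j) (P i j) (a j) (hP i j).1 (hP i j).2 (h j)
  · intro h j
    have hj : cellIdx (mv j) (P i j) = a j := congrFun h j
    have := (cellIdx_spec (mv j) (P i j) (hP i j).1 (hP i j).2).2
    rwa [hj] at this

lemma no_bad (s m : ℕ) (P : Fin (F m) → Fin s → ℝ)
    (hP : ∀ i j, P i j ∈ Set.Ico (0 : ℝ) 1) (mv : Fin s → ℕ)
    (hstrong : ∀ a : Fin s → ℕ, (∀ j, a j < F (mv j)) →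
      Nat.card {i : Fin (F m) //
          ∀ j, P i j ∈ Set.Ico (zbar (a j) / phi ^ (mv j)) (zbar (a j + 1) / phi ^ (mv j))} =
        F ((m : ℤ) - ∑ j, ((mv j : ℤ) + (zd0 (a j) : ℤ))))
    (j0 : Fin s) (l : ℕ) (hl : mv j0 = l + 1) (a : Fin s → ℕ)
    (ha : ∀ j, j ≠ j0 → a j < F (mv j))
    (hbad : expo s m mv (Finset.univ.erase j0) a = (l:ℤ) - 1) : False := by
  classical
  set aw := Function.update a j0 0 with haw
  have hawmem : aw ∈ Fintype.piFinset (BB s mv (Finset.univ.erase j0)) := by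
    rw [Fintype.mem_piFinset]
    intro j
    by_cases h : j = j0
    · subst h
      simp [BB, aw, Function.update]
    · simp only [BB, Finset.mem_erase, h, Finset.mem_univ, and_true, if_pos, ne_eq,
        not_false_iff, Finset.mem_range]
      simpa [aw, Function.update, h] using ha j h
  have hexpo : expo s m mv (Finset.univ.erase j0) aw = (l:ℤ) - 1 := by
    rw [← hbad]
    unfold expo
    congr 1
    apply Finset.sum_congr rfl
    intro j hj
    have : j ≠ j0 := Finset.ne_of_mem_erase hj
    simp [aw, Function.update, this]
  have h1 : gg s m mv Finset.univ < gg s m mv (Finset.univ.erase j0) :=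
    gg_lt_erase s m mv Finset.univ j0 (Finset.mem_univ j0) l hl aw hawmem hexpo
  have h2 := gg_le_Fm s m mv (Finset.univ.erase j0)
  have h3 := gg_univ s m P hP mv hstrong
  omega

lemma step_lemma (s m : ℕ) (P : Fin (F m) → Fin s → ℝ)
    (hP : ∀ i j, P i j ∈ Set.Ico (0 : ℝ) 1) (mv : Fin s → ℕ)
    (hstrong : ∀ a : Fin s → ℕ, (∀ j, a j < F (mv j)) →
      Nat.card {i : Fin (F m) //
          ∀ j, P i j ∈ Set.Ico (zbar (a j) / phi ^ (mv j)) (zbar (a j + 1) / phi ^ (mv j))} =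
        F ((m : ℤ) - ∑ j, ((mv j : ℤ) + (zd0 (a j) : ℤ))))
    (j0 : Fin s) (l : ℕ) (hl : mv j0 = l + 1) :
    ∀ a : Fin s → ℕ, (∀ j, a j < F ((Function.update mv j0 l) j)) →
      Nat.card {i : Fin (F m) //
          ∀ j, P i j ∈ Set.Ico (zbar (a j) / phi ^ ((Function.update mv j0 l) j))
            (zbar (a j + 1) / phi ^ ((Function.update mv j0 l) j))} =
        F ((m : ℤ) - ∑ j, (((Function.update mv j0 l) j : ℤ) + (zd0 (a j) : ℤ))) := by
  classical
  intro a ha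
  have hα : a j0 < F (l:ℤ) := by
    have := ha j0
    simpa [Function.update] using this
  set α := a j0 with hαdef
  set b := zshift α 1 with hb
  have hphi : phi ≠ 0 := ne_of_gt phi_pos
  have hdiv : ∀ z : ℝ, phi * z / phi^(l+1) = z / phi^l := by
    intro z
    rw [pow_succ]
    rw [div_eq_div_iff (by positivity) (by positivity)]
    ring
  have hzb : zbar b = phi * zbar α := zbar_zshift α
  have hzd0b : zd0 b = 0 := by
    unfold zd0
    rw [if_neg (zero_not_mem_zshift α)]
  have haj : ∀ j, j ≠ j0 → a j < F (mv j) := by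
    intro j hj
    have := ha j
    simpa [Function.update, hj] using this
  by_cases h0 : 0 ∈ zeckSet α
  · -- digit 1 case
    have hsucc : zshift (α+1) 1 = b + 1 := zshift_succ_of_one α h0
    have hzb1 : zbar (b+1) = phi * zbar (α+1) := by rw [← hsucc, zbar_zshift]
    have hbF : b + 1 ≤ F ((l:ℤ)+1) := by
      calc b + 1 = zshift (α+1) 1 := hsucc.symm
      _ ≤ zshift (F (l:ℤ)) 1 := zshift_le (by omega)
      _ = F ((l:ℤ)+1) := zshift_F l
    have hb1 : ∀ j, Function.update a j0 b j < F (mv j) := by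
      intro j
      by_cases h : j = j0
      · subst h
        simp only [Function.update_self]
        rw [hl]
        push_cast
        omega
      · simp only [Function.update_of_ne h]
        exact haj j h
    have hcount := hstrong (Function.update a j0 b) hb1
    have hcell : ∀ j, Set.Ico (zbar (Function.update a j0 b j) / phi ^ (mv j))
        (zbar (Function.update a j0 b j + 1) / phi ^ (mv j))
        = Set.Ico (zbar (a j) / phi ^ ((Function.update mv j0 l) j))
          (zbar (a j + 1) / phi ^ ((Function.update mv j0 l) j)) := by
      intro j
      by_cases h : j = j0
      · subst h
        simp only [Function.update_self]
        rw [hl]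
        rw [show zbar b / phi^(l+1) = zbar α / phi^l by rw [hzb, hdiv],
            show zbar (b+1) / phi^(l+1) = zbar (α+1) / phi^l by rw [hzb1, hdiv]]
      · simp [Function.update, h]
    have hcard : Nat.card {i : Fin (F m) //
        ∀ j, P i j ∈ Set.Ico (zbar (a j) / phi ^ ((Function.update mv j0 l) j))
          (zbar (a j + 1) / phi ^ ((Function.update mv j0 l) j))}
        = Nat.card {i : Fin (F m) //
        ∀ j, P i j ∈ Set.Ico (zbar (Function.update a j0 b j) / phi ^ (mv j))
          (zbar (Function.update a j0 b j + 1) / phi ^ (mv j))} := by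
      apply Nat.card_congr
      apply Equiv.subtypeEquivRight
      intro i
      constructor
      · intro h j
        rw [hcell j]
        exact h j
      · intro h j
        rw [← hcell j]
        exact h j
    rw [hcard, hcount]
    congr 1
    rw [← Finset.add_sum_erase Finset.univ _ (Finset.mem_univ j0),
        ← Finset.add_sum_erase Finset.univ _ (Finset.mem_univ j0)]
    have hzd0α : zd0 α = 1 := by unfold zd0; rw [if_pos h0]
    have h1 : ((mv j0 : ℤ) + (zd0 (Function.update a j0 b j0) : ℤ))
        = (((Function.update mv j0 l) j0 : ℤ) + (zd0 (a j0) : ℤ)) := by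
      simp only [Function.update_self]
      rw [hl, hzd0b, ← hαdef, hzd0α]
      push_cast
      ring
    have h2 : ∑ j ∈ Finset.univ.erase j0, ((mv j : ℤ) + (zd0 (Function.update a j0 b j) : ℤ))
        = ∑ j ∈ Finset.univ.erase j0,
            (((Function.update mv j0 l) j : ℤ) + (zd0 (a j) : ℤ)) := by
      apply Finset.sum_congr rfl
      intro j hj
      have h : j ≠ j0 := Finset.ne_of_mem_erase hj
      simp [Function.update, h]
    rw [h1, h2]
  · -- digit 0 case
    obtain ⟨hsucc2, hins⟩ := zshift_succ_of_zero α h0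
    have hzb2 : zbar (b+2) = phi * zbar (α+1) := by rw [← hsucc2, zbar_zshift]
    have hzb1le : zbar b ≤ zbar (b+1) := zbar_le (by omega)
    have hzb2le : zbar (b+1) ≤ zbar (b+2) := zbar_le (by omega)
    have hzd0b1 : zd0 (b+1) = 1 := by
      unfold zd0
      rw [if_pos (by rw [hins]; exact Finset.mem_insert_self 0 _)]
    have hzd0α : zd0 α = 0 := by unfold zd0; rw [if_neg h0]
    have hbF : b + 2 ≤ F ((l:ℤ)+1) := by
      calc b + 2 = zshift (α+1) 1 := hsucc2.symm
      _ ≤ zshift (F (l:ℤ)) 1 := zshift_le (by omega)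
      _ = F ((l:ℤ)+1) := zshift_F l
    have hb1 : ∀ j, Function.update a j0 b j < F (mv j) := by
      intro j
      by_cases h : j = j0
      · subst h
        simp only [Function.update_self]
        rw [hl]
        push_cast
        omega
      · simp only [Function.update_of_ne h]
        exact haj j h
    have hb2 : ∀ j, Function.update a j0 (b+1) j < F (mv j) := by
      intro j
      by_cases h : j = j0
      · subst h
        simp only [Function.update_self]
        rw [hl]
        push_cast
        omega
      · simp only [Function.update_of_ne h]
        exact haj j h
    have hcount1 := hstrong (Function.update a j0 b) hb1
    have hcount2 := hstrong (Function.update a j0 (b+1)) hb2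
    have hppos : (0:ℝ) < phi^(l+1) := pow_pos phi_pos (l+1)
    have hu01 : zbar b / phi^(l+1) ≤ zbar (b+1) / phi^(l+1) := by gcongr
    have hu12 : zbar (b+1) / phi^(l+1) ≤ zbar (b+2) / phi^(l+1) := by gcongr
    have he0 : zbar α / phi^l = zbar b / phi^(l+1) := by rw [hzb, hdiv]
    have he2 : zbar (α+1) / phi^l = zbar (b+2) / phi^(l+1) := by rw [hzb2, hdiv]
    have hiff : ∀ i : Fin (F m),
        (∀ j, P i j ∈ Set.Ico (zbar (a j) / phi ^ ((Function.update mv j0 l) j))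
          (zbar (a j + 1) / phi ^ ((Function.update mv j0 l) j)))
        ↔ ((∀ j, P i j ∈ Set.Ico (zbar (Function.update a j0 b j) / phi ^ (mv j))
              (zbar (Function.update a j0 b j + 1) / phi ^ (mv j)))
          ∨ (∀ j, P i j ∈ Set.Ico (zbar (Function.update a j0 (b+1) j) / phi ^ (mv j))
              (zbar (Function.update a j0 (b+1) j + 1) / phi ^ (mv j)))) := by
      intro i
      constructor
      · intro h
        have hj0m := h j0
        simp only [Function.update_self] at hj0m
        rw [he0, he2] at hj0m
        rcases (Ico_split hu01 hu12).1 hj0m with hc | hc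
        · left
          intro j
          by_cases hj : j = j0
          · subst hj
            simp only [Function.update_self]
            rw [hl]
            exact hc
          · simp only [Function.update_of_ne hj]
            have := h j
            rwa [Function.update_of_ne hj] at this
        · right
          intro j
          by_cases hj : j = j0
          · subst hj
            simp only [Function.update_self]
            rw [hl]
            exact hc
          · simp only [Function.update_of_ne hj]
            have := h j
            rwa [Function.update_of_ne hj] at this
      · intro h j
        by_cases hj : j = j0
        · subst hj
          simp only [Function.update_self]
          rw [he0, he2]
          apply (Ico_split hu01 hu12).2
          rcases h with h | h
          · left
            have h2 := h j
            simp only [Function.update_self] at h2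
            rwa [hl] at h2
          · right
            have h2 := h j
            simp only [Function.update_self] at h2
            rwa [hl] at h2
        · simp only [Function.update_of_ne hj]
          rcases h with h | h
          · have h2 := h j
            rwa [Function.update_of_ne hj] at h2
          · have h2 := h j
            rwa [Function.update_of_ne hj] at h2
    have hdisj : ∀ i : Fin (F m),
        ¬((∀ j, P i j ∈ Set.Ico (zbar (Function.update a j0 b j) / phi ^ (mv j))
              (zbar (Function.update a j0 b j + 1) / phi ^ (mv j)))
          ∧ (∀ j, P i j ∈ Set.Ico (zbar (Function.update a j0 (b+1) j) / phi ^ (mv j))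
              (zbar (Function.update a j0 (b+1) j + 1) / phi ^ (mv j)))) := by
      rintro i ⟨h1, h2⟩
      have ha1 := h1 j0
      have ha2 := h2 j0
      simp only [Function.update_self] at ha1 ha2
      rw [hl] at ha1 ha2
      have := ha1.2
      have := ha2.1
      linarith
    have hsplit : Nat.card {i : Fin (F m) //
        ∀ j, P i j ∈ Set.Ico (zbar (a j) / phi ^ ((Function.update mv j0 l) j))
          (zbar (a j + 1) / phi ^ ((Function.update mv j0 l) j))}
        = Nat.card {i : Fin (F m) //
            (∀ j, P i j ∈ Set.Ico (zbar (Function.update a j0 b j) / phi ^ (mv j))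
              (zbar (Function.update a j0 b j + 1) / phi ^ (mv j)))
          ∨ (∀ j, P i j ∈ Set.Ico (zbar (Function.update a j0 (b+1) j) / phi ^ (mv j))
              (zbar (Function.update a j0 (b+1) j + 1) / phi ^ (mv j)))} :=
      Nat.card_congr (Equiv.subtypeEquivRight hiff)
    rw [hsplit, natcard_or _ _ hdisj, hcount1, hcount2]
    have hs1 : ∑ j, ((mv j : ℤ) + (zd0 (Function.update a j0 b j) : ℤ))
        = ((l:ℤ)+1) + ∑ j ∈ Finset.univ.erase j0, ((mv j : ℤ) + (zd0 (a j) : ℤ)) := by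
      rw [← Finset.add_sum_erase Finset.univ _ (Finset.mem_univ j0)]
      congr 1
      · simp only [Function.update_self]
        rw [hl, hzd0b]
        push_cast
        ring
      · apply Finset.sum_congr rfl
        intro j hj
        have h : j ≠ j0 := Finset.ne_of_mem_erase hj
        simp [Function.update, h]
    have hs2 : ∑ j, ((mv j : ℤ) + (zd0 (Function.update a j0 (b+1) j) : ℤ))
        = ((l:ℤ)+2) + ∑ j ∈ Finset.univ.erase j0, ((mv j : ℤ) + (zd0 (a j) : ℤ)) := by
      rw [← Finset.add_sum_erase Finset.univ _ (Finset.mem_univ j0)]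
      congr 1
      · simp only [Function.update_self]
        rw [hl, hzd0b1]
        push_cast
        ring
      · apply Finset.sum_congr rfl
        intro j hj
        have h : j ≠ j0 := Finset.ne_of_mem_erase hj
        simp [Function.update, h]
    have hsg : ∑ j, (((Function.update mv j0 l) j : ℤ) + (zd0 (a j) : ℤ))
        = (l:ℤ) + ∑ j ∈ Finset.univ.erase j0, ((mv j : ℤ) + (zd0 (a j) : ℤ)) := by
      rw [← Finset.add_sum_erase Finset.univ _ (Finset.mem_univ j0)]
      congr 1
      · simp only [Function.update_self]
        rw [← hαdef, hzd0α]
        push_cast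
        ring
      · apply Finset.sum_congr rfl
        intro j hj
        have h : j ≠ j0 := Finset.ne_of_mem_erase hj
        simp [Function.update, h]
    rw [hs1, hs2, hsg]
    set S' := ∑ j ∈ Finset.univ.erase j0, ((mv j : ℤ) + (zd0 (a j) : ℤ)) with hS'
    set t : ℤ := (m:ℤ) - ((l:ℤ) + S') with hts
    have e1 : (m:ℤ) - (((l:ℤ)+1) + S') = t - 1 := by rw [hts]; ring
    have e2 : (m:ℤ) - (((l:ℤ)+2) + S') = t - 2 := by rw [hts]; ring
    rw [e1, e2]
    rcases lt_trichotomy t (-1) with ht | ht | ht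
    · rw [F_neg (t-1) (by omega), F_neg (t-2) (by omega), F_neg t (by omega)]
    · exfalso
      apply no_bad s m P hP mv hstrong j0 l hl a haj
      unfold expo
      rw [← hS']
      omega
    · exact (F_add t (by omega)).symm

/-- If a point set of `F^m` points in `[0,1)^s` is strongly
`(m₁,…,m_s)`-equidistributed in base φ, then it is strongly `(n₁,…,n_s)`-equidistributed
for all `0 ≤ n_j ≤ m_j`. -/
theorem statement7 (s m : ℕ) (P : Fin (F m) → Fin s → ℝ)
    (hP : ∀ i j, P i j ∈ Set.Ico (0 : ℝ) 1)
    (mv : Fin s → ℕ) (hstrong : StronglyEquidistributed s m P mv)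
    (nv : Fin s → ℕ) (hnv : ∀ j, nv j ≤ mv j) :
    StronglyEquidistributed s m P nv := by
  suffices H : ∀ (k : ℕ) (mv : Fin s → ℕ), StronglyEquidistributed s m P mv →
      (∀ j, nv j ≤ mv j) → (∑ j, (mv j - nv j)) = k → StronglyEquidistributed s m P nv by
    exact H _ mv hstrong hnv rfl
  intro k
  induction k using Nat.strong_induction_on with
  | _ k IH =>
    intro mv hs hle hsum
    rcases Nat.eq_zero_or_pos k with rfl | hk
    · have hz := Finset.sum_eq_zero_iff.1 hsum
      have : mv = nv := by
        funext j
        have := hz j (Finset.mem_univ j)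
        have := hle j
        omega
      rwa [this] at hs
    · have hex : ∃ j0, nv j0 < mv j0 := by
        by_contra hc
        push_neg at hc
        have : ∑ j, (mv j - nv j) = 0 := by
          apply Finset.sum_eq_zero
          intro j _
          have := hc j
          omega
        omega
      obtain ⟨j0, hj0⟩ := hex
      obtain ⟨l, hl⟩ : ∃ l, mv j0 = l + 1 := ⟨mv j0 - 1, by omega⟩
      have hs' : StronglyEquidistributed s m P (Function.update mv j0 l) :=
        step_lemma s m P hP mv hs j0 l hl
      apply IH (k-1) (by omega) (Function.update mv j0 l) hs'
      · intro j
        by_cases h : j = j0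
        · subst h; simp only [Function.update_self]; omega
        · simp only [Function.update_of_ne h]; exact hle j
      · rw [← Finset.add_sum_erase Finset.univ _ (Finset.mem_univ j0)] at hsum ⊢
        have h1 : ∑ j ∈ Finset.univ.erase j0, (Function.update mv j0 l j - nv j)
            = ∑ j ∈ Finset.univ.erase j0, (mv j - nv j) := by
          apply Finset.sum_congr rfl
          intro j hj
          have h : j ≠ j0 := Finset.ne_of_mem_erase hj
          simp [Function.update, h]
        rw [h1]
        simp only [Function.update_self]
        omega
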